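/- Let α, β be positive odd integers, ω ∈ ℤ, and η ≥ 0 an integer. Then S_η ⊕ 2^{η+1}αβ·T_η is a complete residue system modulo 2^{η+1}αβ·ℤ²: for every z ∈ ℤ² there exist unique s ∈ S_η, ℓ ∈ T_η and γ ∈ ℤ² such that z = s + 2^{η+1}αβ·ℓ + 2^{η+1}αβ·γ. -/

import Mathlib

open MeasureTheory Matrix Complex
open scoped ENNReal

noncomputable section

/-- The exponential function `x ↦ e^{2πi⟨l,x⟩}` on `Fin n → ℝ`. -/
def expChar {n : ℕ} (l x : Fin n → ℝ) : ℂ :=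
  Complex.exp (2 * Real.pi * Complex.I * Complex.ofReal (∑ i, l i * x i))

/-- `Λ` is an orthogonal set of `μ`: the exponentials `e^{2πi⟨λ,·⟩}`, `λ ∈ Λ`,
form an orthonormal family in `L²(μ)`. -/
def IsOrthogonalSet {n : ℕ} (μ : Measure (Fin n → ℝ)) (Λ : Set (Fin n → ℝ)) : Prop :=
  ∃ b : Λ → Lp ℂ 2 μ,
    (∀ l : Λ, (b l : (Fin n → ℝ) → ℂ) =ᵐ[μ] expChar (l : Fin n → ℝ)) ∧
    Orthonormal ℂ b

/-- `Λ` is a spectrum of `μ`: the exponentials `e^{2πi⟨λ,·⟩}`, `λ ∈ Λ`,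
form an orthonormal basis (orthonormal and total) of `L²(μ)`. -/
def IsSpectrum {n : ℕ} (μ : Measure (Fin n → ℝ)) (Λ : Set (Fin n → ℝ)) : Prop :=
  ∃ b : Λ → Lp ℂ 2 μ,
    (∀ l : Λ, (b l : (Fin n → ℝ) → ℂ) =ᵐ[μ] expChar (l : Fin n → ℝ)) ∧
    Orthonormal ℂ b ∧
    (Submodule.span ℂ (Set.range b)).topologicalClosure = ⊤

/-- `μ` is a spectral measure : some countable `Λ` is a spectrum of `μ`. -/
def IsSpectralMeasure {n : ℕ} (μ : Measure (Fin n → ℝ)) : Prop :=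
  ∃ Λ : Set (Fin n → ℝ), Λ.Countable ∧ IsSpectrum μ Λ

/-- A real matrix is expansive if all of its (complex) eigenvalues have modulus `> 1`. -/
def Expansive {n : ℕ} (M : Matrix (Fin n) (Fin n) ℝ) : Prop :=
  ∀ z : ℂ, (M.map (Complex.ofReal)).charpoly.IsRoot z → 1 < ‖z‖

/-- `μ` is the self-affine measure associated with `(M, D)`: a compactly supported
Borel probability measure satisfying `μ = (1/#D) ∑_{d ∈ D} μ ∘ φ_d⁻¹`,
where `φ_d x = M⁻¹(x + d)`. -/
def IsSelfAffineMeasure {n : ℕ} (M : Matrix (Fin n) (Fin n) ℝ) (D : Finset (Fin n → ℝ))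
    (μ : Measure (Fin n → ℝ)) : Prop :=
  IsProbabilityMeasure μ ∧
  (∃ K : Set (Fin n → ℝ), IsCompact K ∧ μ Kᶜ = 0) ∧
  μ = (D.card : ℝ≥0∞)⁻¹ • ∑ d ∈ D, μ.map (fun x => M⁻¹.mulVec (x + d))

/-- Coordinatewise cast of an integer vector to a real vector. -/
def intCast {n : ℕ} (v : Fin n → ℤ) : Fin n → ℝ := fun i => (v i : ℝ)

/-- The matrix `H = N^{-1/2} (e^{2πi⟨M⁻¹d, s⟩})_{d ∈ D, s ∈ S}`. -/
def hadamardH {n : ℕ} (M : Matrix (Fin n) (Fin n) ℤ) (D S : Finset (Fin n → ℤ)) :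
    Matrix D S ℂ := fun d s =>
  (Real.sqrt (D.card) : ℂ)⁻¹ *
    Complex.exp (2 * Real.pi * Complex.I *
      Complex.ofReal (∑ i, ((M.map (Int.cast : ℤ → ℝ))⁻¹.mulVec (intCast d.1)) i * ((s.1 i : ℝ))))

/-- `(M, D, S)` is a Hadamard triple: `#D = #S` and
`H = N^{-1/2}(e^{2πi⟨M⁻¹d,s⟩})` is unitary. -/
def IsHadamardTriple {n : ℕ} (M : Matrix (Fin n) (Fin n) ℤ) (D S : Finset (Fin n → ℤ)) :
    Prop :=
  D.card = S.card ∧ (hadamardH M D S)ᴴ * hadamardH M D S = 1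

/-- `(M, D)` is admissible: there is `S ⊂ ℤⁿ` such that `(M, D, S)` is a Hadamard triple. -/
def IsAdmissible {n : ℕ} (M : Matrix (Fin n) (Fin n) ℤ) (D : Finset (Fin n → ℤ)) : Prop :=
  ∃ S : Finset (Fin n → ℤ), IsHadamardTriple M D S

/-- The mask polynomial `m_D(x) = (1/#D) ∑_{d∈D} e^{2πi⟨d,x⟩}` of a finite set `D`. -/
def maskPoly {n : ℕ} (D : Finset (Fin n → ℝ)) (x : Fin n → ℝ) : ℂ :=
  (D.card : ℂ)⁻¹ * ∑ d ∈ D, Complex.exp (2 * Real.pi * Complex.I * Complex.ofReal (∑ i, d i * x i))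

/-- The Fourier transform `μ̂(ξ) = ∫ e^{2πi⟨x,ξ⟩} dμ(x)`. -/
def fourierMeasure {n : ℕ} (μ : Measure (Fin n → ℝ)) (ξ : Fin n → ℝ) : ℂ :=
  ∫ x, expChar ξ x ∂μ

/-- The sets `T_{η,0}, T_{η,1}, T_{η,2}, T_{η,3}` associated with positive odd
integers `α, β`, `ω ∈ ℤ` and `η ≥ 0`:
`T_{η,i} = {(2^η(2k+δᵢ)β, (2k'+εᵢ)α − (2k+δᵢ)ω)ᵗ/(2^{η+1}αβ) : 0 ≤ k < α, 0 ≤ k' < 2^η β}`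
where `δᵢ = i % 2` and `εᵢ = i / 2`. -/
def Tset (α β ω : ℤ) (η : ℕ) (i : Fin 4) : Set (Fin 2 → ℝ) :=
  { v | ∃ k k' : ℤ, 0 ≤ k ∧ k < α ∧ 0 ≤ k' ∧ k' < 2 ^ η * β ∧
      v = ((2 : ℝ) ^ (η + 1) * (α : ℝ) * (β : ℝ))⁻¹ •
        intCast ![2 ^ η * (2 * k + ((i.val % 2 : ℕ) : ℤ)) * β,
          (2 * k' + ((i.val / 2 : ℕ) : ℤ)) * α - (2 * k + ((i.val % 2 : ℕ) : ℤ)) * ω] }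
lemma exists_decomp (B A z : ℤ) (hB : 0 < B) (hA : 0 < A) :
    ∃ r a g : ℤ, 0 ≤ r ∧ r < B ∧ 0 ≤ a ∧ a < A ∧ z = r + B * a + B * A * g := by
  refine ⟨z % B, (z / B) % A, z / B / A, Int.emod_nonneg _ hB.ne',
    Int.emod_lt_of_pos _ hB, Int.emod_nonneg _ hA.ne', Int.emod_lt_of_pos _ hA, ?_⟩
  have h1 := Int.emod_add_mul_ediv z B
  have h2 := Int.emod_add_mul_ediv (z / B) A
  linear_combination -h1 - B * h2

lemma decomp_eq {B A z r a g : ℤ} (hB : 0 < B) (hA : 0 < A)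
    (hr : 0 ≤ r) (hr' : r < B) (ha : 0 ≤ a) (ha' : a < A)
    (h : z = r + B * a + B * A * g) :
    r = z % B ∧ a = z / B % A ∧ g = z / B / A := by
  have h1 : z / B = a + A * g ∧ z % B = r :=
    (Int.ediv_emod_unique hB).mpr ⟨by linear_combination -h, hr, hr'⟩
  have h2 : (z / B) / A = g ∧ (z / B) % A = a :=
    (Int.ediv_emod_unique hA).mpr ⟨by linear_combination -h1.1, ha, ha'⟩
  exact ⟨h1.2.symm, h2.2.symm, h2.1.symm⟩

theorem complete_residue_system
    (α β ω : ℤ) (hα : Odd α) (hβ : Odd β) (hαpos : 0 < α) (hβpos : 0 < β) (η : ℕ) :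
    ∀ z : Fin 2 → ℤ,
      ∃! w : (Fin 2 → ℤ) × (Fin 2 → ℝ) × (Fin 2 → ℤ),
        (0 ≤ w.1 0 ∧ w.1 0 < 2 ^ η * β ∧ 0 ≤ w.1 1 ∧ w.1 1 < α) ∧
        (w.2.1 ∈ ⋃ i : Fin 4, Tset α β ω η i) ∧
        intCast z = intCast w.1 + ((2 : ℝ) ^ (η + 1) * (α : ℝ) * (β : ℝ)) • w.2.1 +
          ((2 : ℝ) ^ (η + 1) * (α : ℝ) * (β : ℝ)) • intCast w.2.2 := by
  intro z
  have hαR : (0:ℝ) < (α:ℝ) := by exact_mod_cast hαpos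
  have hβR : (0:ℝ) < (β:ℝ) := by exact_mod_cast hβpos
  have hN : ((2:ℝ) ^ (η+1) * (α:ℝ) * (β:ℝ)) ≠ 0 :=
    ne_of_gt (mul_pos (mul_pos (by positivity) hαR) hβR)
  have hB : (0:ℤ) < 2 ^ η * β := by positivity
  have hA : (0:ℤ) < 2 * α := by omega
  have hA' : (0:ℤ) < 2 * (2 ^ η * β) := by positivity
  -- coordinate 0 decomposition
  obtain ⟨s1, q, g0, hs10, hs11, hq0, hq1, hz0⟩ := exists_decomp (2^η*β) (2*α) (z 0) hB hA
  obtain ⟨k, d, hd0, hd1, hk0, hk1, hqkd⟩ :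
      ∃ k d : ℤ, 0 ≤ d ∧ d < 2 ∧ 0 ≤ k ∧ k < α ∧ q = 2*k + d :=
    ⟨q/2, q%2, by omega, by omega, by omega, by omega, by omega⟩
  -- coordinate 1 decomposition
  obtain ⟨s2, p, g1, hs20, hs21, hp0, hp1, hz1⟩ :=
    exists_decomp α (2*(2^η*β)) (z 1 + q*ω) hαpos hA'
  obtain ⟨k', e, he0, he1, hk'0, hk'1, hpke⟩ :
      ∃ k' e : ℤ, 0 ≤ e ∧ e < 2 ∧ 0 ≤ k' ∧ k' < 2^η*β ∧ p = 2*k' + e :=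
    ⟨p/2, p%2, by omega, by omega, by omega, by omega, by omega⟩
  have key0 : z 0 = s1 + 2^η*(2*k + d)*β + 2^(η+1)*α*β*g0 := by
    linear_combination hz0 + (2^η*β) * hqkd
  have key1 : z 1 = s2 + ((2*k' + e)*α - (2*k + d)*ω) + 2^(η+1)*α*β*g1 := by
    linear_combination hz1 + α * hpke - ω * hqkd
  refine ⟨(![s1, s2],
      ((2:ℝ) ^ (η+1) * (α:ℝ) * (β:ℝ))⁻¹ •
        intCast ![2^η*(2*k + d)*β, (2*k' + e)*α - (2*k + d)*ω],
      ![g0, g1]), ⟨?_, ?_, ?_⟩, ?_⟩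
  · simpa using ⟨hs10, hs11, hs20, hs21⟩
  · rw [Set.mem_iUnion]
    refine ⟨⟨(d + 2*e).toNat, by omega⟩, k, k', hk0, hk1, hk'0, hk'1, ?_⟩
    show _ = _ • intCast ![2^η*(2*k + ((((⟨(d + 2*e).toNat, by omega⟩ : Fin 4)).val % 2 : ℕ)) : ℤ)*β, _]
    rw [show ((((d + 2*e).toNat % 2 : ℕ)) : ℤ) = d from by omega,
      show ((((d + 2*e).toNat / 2 : ℕ)) : ℤ) = e from by omega]
  · show intCast z = _
    rw [smul_smul, mul_inv_cancel₀ hN, one_smul]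
    funext j
    fin_cases j
    · simp only [intCast, Pi.add_apply, Pi.smul_apply, smul_eq_mul, Matrix.cons_val_zero]
      exact_mod_cast key0
    · simp only [intCast, Pi.add_apply, Pi.smul_apply, smul_eq_mul, Matrix.cons_val_one,
        Matrix.head_cons]
      exact_mod_cast key1
  · rintro ⟨s, v, g⟩ ⟨⟨hb0, hb1, hb2, hb3⟩, hmem, heq⟩
    rw [Set.mem_iUnion] at hmem
    obtain ⟨i2, k2, k2', hk20, hk21, hk2'0, hk2'1, hveq⟩ := hmem
    have hd2 : (0:ℤ) ≤ ((i2.val % 2 : ℕ) : ℤ) ∧ ((i2.val % 2 : ℕ) : ℤ) < 2 := by omega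
    have he2 : (0:ℤ) ≤ ((i2.val / 2 : ℕ) : ℤ) ∧ ((i2.val / 2 : ℕ) : ℤ) < 2 := by
      have := i2.isLt; omega
    rw [hveq, smul_smul, mul_inv_cancel₀ hN, one_smul] at heq
    have e0 : z 0 = s 0 + 2^η*(2*k2 + ((i2.val % 2 : ℕ) : ℤ))*β + 2^(η+1)*α*β * g 0 := by
      have h0 := congrFun heq 0
      simp only [intCast, Pi.add_apply, Pi.smul_apply, smul_eq_mul,
        Matrix.cons_val_zero] at h0
      exact_mod_cast h0
    have e1 : z 1 = s 1 + ((2*k2' + ((i2.val / 2 : ℕ) : ℤ))*α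
        - (2*k2 + ((i2.val % 2 : ℕ) : ℤ))*ω) + 2^(η+1)*α*β * g 1 := by
      have h1 := congrFun heq 1
      simp only [intCast, Pi.add_apply, Pi.smul_apply, smul_eq_mul,
        Matrix.cons_val_one, Matrix.head_cons] at h1
      exact_mod_cast h1
    -- canonical values for coordinate 0
    have c0 := decomp_eq hB hA hs10 hs11 hq0 hq1 hz0
    have c0' := decomp_eq hB hA hb0 hb1
      (by omega : (0:ℤ) ≤ 2*k2 + ((i2.val % 2 : ℕ) : ℤ))
      (by omega : 2*k2 + ((i2.val % 2 : ℕ) : ℤ) < 2*α)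
      (by linear_combination e0 : z 0 = s 0 + (2^η*β) * (2*k2 + ((i2.val % 2 : ℕ) : ℤ))
        + (2^η*β) * (2*α) * g 0)
    have hs0 : s 0 = s1 := c0'.1.trans c0.1.symm
    have hqq : 2*k2 + ((i2.val % 2 : ℕ) : ℤ) = q := c0'.2.1.trans c0.2.1.symm
    have hg0 : g 0 = g0 := c0'.2.2.trans c0.2.2.symm
    have hkk : k2 = k := by omega
    have hdd : ((i2.val % 2 : ℕ) : ℤ) = d := by omega
    -- coordinate 1
    have c1 := decomp_eq hαpos hA' hs20 hs21 hp0 hp1 hz1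
    have c1' := decomp_eq hαpos hA' hb2 hb3
      (by omega : (0:ℤ) ≤ 2*k2' + ((i2.val / 2 : ℕ) : ℤ))
      (by omega : 2*k2' + ((i2.val / 2 : ℕ) : ℤ) < 2*(2^η*β))
      (by linear_combination e1 - ω * hqq :
        z 1 + q*ω = s 1 + α * (2*k2' + ((i2.val / 2 : ℕ) : ℤ))
        + α * (2*(2^η*β)) * g 1)
    have hs1' : s 1 = s2 := c1'.1.trans c1.1.symm
    have hpp : 2*k2' + ((i2.val / 2 : ℕ) : ℤ) = p := c1'.2.1.trans c1.2.1.symm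
    have hg1 : g 1 = g1 := c1'.2.2.trans c1.2.2.symm
    have hkk' : k2' = k' := by omega
    have hee : ((i2.val / 2 : ℕ) : ℤ) = e := by omega
    have hs : s = ![s1, s2] := by
      funext j; fin_cases j
      · simpa using hs0
      · simpa using hs1'
    have hg : g = ![g0, g1] := by
      funext j; fin_cases j
      · simpa using hg0
      · simpa using hg1
    have hv : v = ((2:ℝ) ^ (η+1) * (α:ℝ) * (β:ℝ))⁻¹ •
        intCast ![2^η*(2*k + d)*β, (2*k' + e)*α - (2*k + d)*ω] := by
      have hveq' : v = _ := hveq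
      rw [hveq', hkk, hkk', hdd, hee]
    rw [show (s, v, g) = ((s : Fin 2 → ℤ), (v : Fin 2 → ℝ), (g : Fin 2 → ℤ)) from rfl, hs, hg, hv]


end
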